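/- For any topological space X, if player ONE has a winning strategy in the mildly compact-clopen game on X, then player TWO has a winning strategy in the mildly Menger game G_fin(C_O, C_O) on X. -/
import Mathlib


/-- `X` is zero-dimensional: it is nonempty and has a base consisting of clopen sets. -/
def ZeroDim (X : Type*) [TopologicalSpace X] : Prop :=
  Nonempty X ∧ ∀ (x : X) (U : Set X), IsOpen U → x ∈ U →
    ∃ C : Set X, IsClopen C ∧ x ∈ C ∧ C ⊆ U

/-- `𝒰` is a cover of `X` consisting of sets satisfying `P`
(e.g. an open cover for `P = IsOpen`, a clopen cover for `P = IsClopen`). -/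
def IsCover {X : Type*} (P : Set X → Prop) (𝒰 : Set (Set X)) : Prop :=
  (∀ U ∈ 𝒰, P U) ∧ ⋃₀ 𝒰 = Set.univ

/-- The selection principle `S_fin(P-covers, P-covers)`: for every sequence of
`P`-covers `u n` there are finite subsets `v n ⊆ u n` whose union is a cover. -/
def SelFin {X : Type*} (P : Set X → Prop) : Prop :=
  ∀ u : ℕ → Set (Set X), (∀ n, IsCover P (u n)) →
    ∃ v : ℕ → Set (Set X), (∀ n, (v n).Finite ∧ v n ⊆ u n) ∧
      (⋃ n, ⋃₀ v n) = Set.univ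

/-- Player ONE has a winning strategy in the selection game `G_fin(P-covers, P-covers)`:
a strategy `σ`, depending on TWO's previous moves, always playing `P`-covers, such that for
every sequence of legal responses by TWO (finite subsets of the cover just played),
the union of TWO's choices fails to cover. -/
def ONEWinsSel {X : Type*} (P : Set X → Prop) : Prop :=
  ∃ σ : List (Set (Set X)) → Set (Set X),
    (∀ h, IsCover P (σ h)) ∧
    ∀ v : ℕ → Set (Set X),
      (∀ n, (v n).Finite ∧ v n ⊆ σ (List.ofFn fun i : Fin n => v i)) →
      (⋃ n, ⋃₀ v n) ≠ Set.univ

/-- Player TWO has a winning strategy in the selection game `G_fin(P-covers, P-covers)`: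
a strategy `τ`, depending on ONE's moves so far, such that against every sequence of
`P`-covers played by ONE, TWO's responses are legal (finite subsets of the corresponding
cover) and their union is a cover. -/
def TWOWinsSel {X : Type*} (P : Set X → Prop) : Prop :=
  ∃ τ : List (Set (Set X)) → Set (Set X),
    ∀ u : ℕ → Set (Set X), (∀ n, IsCover P (u n)) →
      (∀ n, (τ (List.ofFn fun i : Fin (n + 1) => u i)).Finite ∧
        τ (List.ofFn fun i : Fin (n + 1) => u i) ⊆ u n) ∧
      (⋃ n, ⋃₀ τ (List.ofFn fun i : Fin (n + 1) => u i)) = Set.univ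

/-- Player ONE has a winning strategy in the `Q`-`R` game (in round `n`, ONE picks a set
`K n` with `Q (K n)` and TWO responds with a set `U n` with `R (U n)` and `K n ⊆ U n`;
ONE wins if `⋃ n, U n = univ`).  E.g. `Q = IsCompact`, `R = IsClopen` is the
compact-clopen game; `R = IsOpen` gives the compact-open game. -/
def ONEWinsCC {X : Type*} (Q R : Set X → Prop) : Prop :=
  ∃ σ : List (Set X) → Set X,
    (∀ h, Q (σ h)) ∧
    ∀ v : ℕ → Set X,
      (∀ n, R (v n) ∧ σ (List.ofFn fun i : Fin n => v i) ⊆ v n) →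
      (⋃ n, v n) = Set.univ

/-- Player TWO has a winning strategy in the `Q`-`R` game: a strategy `τ`, depending on
ONE's moves so far, such that against every sequence of sets satisfying `Q` played by ONE,
TWO's responses satisfy `R`, contain ONE's corresponding sets, and fail to cover `X`. -/
def TWOWinsCC {X : Type*} (Q R : Set X → Prop) : Prop :=
  ∃ τ : List (Set X) → Set X,
    ∀ u : ℕ → Set X, (∀ n, Q (u n)) →
      (∀ n, R (τ (List.ofFn fun i : Fin (n + 1) => u i)) ∧
        u n ⊆ τ (List.ofFn fun i : Fin (n + 1) => u i)) ∧
      (⋃ n, τ (List.ofFn fun i : Fin (n + 1) => u i)) ≠ Set.univ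

/-- A subset `K` of `X` is mildly compact if every cover of `K` by clopen subsets
of `X` contains a finite subcover. -/
def MildlyCompact {X : Type*} [TopologicalSpace X] (K : Set X) : Prop :=
  ∀ 𝒰 : Set (Set X), (∀ U ∈ 𝒰, IsClopen U) → K ⊆ ⋃₀ 𝒰 →
    ∃ 𝒱 ⊆ 𝒰, 𝒱.Finite ∧ K ⊆ ⋃₀ 𝒱

/-- The quasi-component of a subset `K` of `X`: the intersection of all clopen
subsets of `X` containing `K`. -/
def QuasiComp {X : Type*} [TopologicalSpace X] (K : Set X) : Set X :=
  ⋂₀ {C : Set X | IsClopen C ∧ K ⊆ C}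

set_option linter.unusedSectionVars false

section Aux

variable {X : Type*} [TopologicalSpace X]

open Classical in
/-- Pick a finite subfamily of `u` covering `K`, if one exists. -/
noncomputable def pickS (K : Set X) (u : Set (Set X)) : Set (Set X) :=
  if h : ∃ v ⊆ u, v.Finite ∧ K ⊆ ⋃₀ v then h.choose else ∅

lemma pickS_spec {K : Set X} {u : Set (Set X)}
    (h : ∃ v ⊆ u, v.Finite ∧ K ⊆ ⋃₀ v) :
    pickS K u ⊆ u ∧ (pickS K u).Finite ∧ K ⊆ ⋃₀ pickS K u := by
  rw [pickS, dif_pos h]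
  exact ⟨h.choose_spec.1, h.choose_spec.2⟩

/-- The simulated play: `fGame σ acc l` is TWO's (in the selection game) answer to the
last cover in `l`, when the simulated compact-clopen game has history `acc`. -/
noncomputable def fGame (σ : List (Set X) → Set X) :
    List (Set X) → List (Set (Set X)) → Set (Set X)
  | _, [] => ∅
  | acc, [u] => pickS (σ acc) u
  | acc, u :: w :: rest => fGame σ (acc ++ [⋃₀ pickS (σ acc) u]) (w :: rest)

/-- The list of TWO's clopen moves in the simulated compact-clopen game. -/
noncomputable def WL (σ : List (Set X) → Set X) (acc : List (Set X))
    (u : ℕ → Set (Set X)) : ℕ → List (Set X)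
  | 0 => []
  | n + 1 => WL σ acc u n ++ [⋃₀ pickS (σ (acc ++ WL σ acc u n)) (u n)]

lemma WL_shift (σ : List (Set X) → Set X) (acc : List (Set X))
    (u : ℕ → Set (Set X)) (n : ℕ) :
    acc ++ WL σ acc u (n + 1) =
      (acc ++ [⋃₀ pickS (σ acc) (u 0)]) ++
        WL σ (acc ++ [⋃₀ pickS (σ acc) (u 0)]) (fun k => u (k + 1)) n := by
  induction n with
  | zero => simp [WL]
  | succ n ih =>
      conv_lhs => rw [WL]
      conv_rhs => rw [WL]
      rw [← List.append_assoc, ← List.append_assoc, ih]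

lemma fGame_eq (σ : List (Set X) → Set X) :
    ∀ (n : ℕ) (acc : List (Set X)) (u : ℕ → Set (Set X)),
      fGame σ acc (List.ofFn fun i : Fin (n + 1) => u i) =
        pickS (σ (acc ++ WL σ acc u n)) (u n) := by
  intro n
  induction n with
  | zero => intro acc u; simp [fGame, WL]
  | succ n ih =>
      intro acc u
      have h2 : (List.ofFn fun i : Fin (n + 2) => u i) =
          (u 0) :: List.ofFn fun i : Fin (n + 1) => (fun k => u (k + 1)) (i : ℕ) := by
        rw [List.ofFn_succ]
        simp
      have h3 : fGame σ acc
          ((u 0) :: List.ofFn fun i : Fin (n + 1) => (fun k => u (k + 1)) (i : ℕ)) =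
          fGame σ (acc ++ [⋃₀ pickS (σ acc) (u 0)])
            (List.ofFn fun i : Fin (n + 1) => (fun k => u (k + 1)) (i : ℕ)) := by
        rw [List.ofFn_succ]
        rfl
      have h4 := ih (acc ++ [⋃₀ pickS (σ acc) (u 0)]) (fun k => u (k + 1))
      rw [h2, h3, h4, ← WL_shift]

lemma isClopen_sUnion_finite {s : Set (Set X)} (hfin : s.Finite)
    (hcl : ∀ U ∈ s, IsClopen U) : IsClopen (⋃₀ s) := by
  rw [Set.sUnion_eq_biUnion]
  exact hfin.isClopen_biUnion hcl

end Aux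

/-- If ONE has a winning strategy in the mildly compact-clopen game on `X`, then TWO has
a winning strategy in the mildly Menger game `G_fin(C_O, C_O)` on `X`. -/
theorem stmt4 {X : Type*} [TopologicalSpace X]
    (h : ONEWinsCC (X := X) MildlyCompact IsClopen) :
    TWOWinsSel (X := X) IsClopen := by
  obtain ⟨σ, hσQ, hσwin⟩ := h
  refine ⟨fGame σ [], ?_⟩
  intro u hu
  set v : ℕ → Set (Set X) := fun n => pickS (σ ([] ++ WL σ [] u n)) (u n) with hv
  have hex : ∀ n, ∃ w ⊆ u n, w.Finite ∧ σ ([] ++ WL σ [] u n) ⊆ ⋃₀ w := by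
    intro n
    exact hσQ ([] ++ WL σ [] u n) (u n) (hu n).1
      (by rw [(hu n).2]; exact Set.subset_univ _)
  have hspec : ∀ n, v n ⊆ u n ∧ (v n).Finite ∧ σ ([] ++ WL σ [] u n) ⊆ ⋃₀ v n :=
    fun n => pickS_spec (hex n)
  set W : ℕ → Set X := fun n => ⋃₀ v n with hW
  have hWL : ∀ n, WL σ [] u n = List.ofFn fun i : Fin n => W i := by
    intro n
    induction n with
    | zero => simp [WL]
    | succ n ih =>
        rw [WL, ih, List.ofFn_succ']
        simp only [List.concat_eq_append, Fin.coe_castSucc, Fin.val_last]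
        rw [← ih]
  have hτ : ∀ n, fGame σ [] (List.ofFn fun i : Fin (n + 1) => u i) = v n :=
    fun n => fGame_eq σ n [] u
  have hWcl : ∀ n, IsClopen (W n) := fun n =>
    isClopen_sUnion_finite (hspec n).2.1
      (fun U hU => (hu n).1 U ((hspec n).1 hU))
  have hcover : (⋃ n, W n) = Set.univ := by
    apply hσwin W
    intro n
    refine ⟨hWcl n, ?_⟩
    have := (hspec n).2.2
    rw [List.nil_append, hWL n] at this
    exact this
  constructor
  · intro n
    rw [hτ n]
    exact ⟨(hspec n).2.1, (hspec n).1⟩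
  · calc (⋃ n, ⋃₀ fGame σ [] (List.ofFn fun i : Fin (n + 1) => u i))
        = ⋃ n, W n := by simp only [hτ, hW]
      _ = Set.univ := hcover
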